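/- Let α_1, …, α_{N+N_r−1} be pairwise distinct nonzero elements of a field F, with S_n = V G_n^{-1} as above. Then for every subset S ⊆ {1,…,N} \ {n} with |S| ≤ N_r − 1, the submatrix of S_n consisting of the rows indexed by S and the columns indexed by {2, 3, …, N_r} has rank |S|. -/

import Mathlib

variable {F : Type} [Field F] {N r : ℕ}

/-- The `N × (r+1)` Vandermonde matrix `V` with nodes `α_1, …, α_N`. -/
def Vmat (α : Fin N → F) : Matrix (Fin N) (Fin (r + 1)) F :=
  Matrix.of fun i j => α i ^ (j : ℕ)

/-- The `(r+1) × (r+1)` Vandermonde matrix `G_n` with row nodes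
`α_n, β_1, …, β_r` (where `β_i` plays the role of `α_{N+i}`). -/
def Gmat (α : Fin N → F) (β : Fin r → F) (n : Fin N) :
    Matrix (Fin (r + 1)) (Fin (r + 1)) F :=
  Matrix.of fun i j => ((Fin.cons (α n) β : Fin (r + 1) → F) i) ^ (j : ℕ)

/-- The `(r+1) × r` matrix `G̃` whose first row is zero and whose row `i+1`
is the Vandermonde row `(1, β_i, …, β_i^{r-1})`. -/
def Gtil (β : Fin r → F) : Matrix (Fin (r + 1)) (Fin r) F :=
  Matrix.of fun i j => ((Fin.cons 0 (fun i' => β i' ^ (j : ℕ)) : Fin (r + 1) → F) i)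

/-- The matrix `S_n = V · G_n⁻¹`. -/
noncomputable def Smat (α : Fin N → F) (β : Fin r → F) (n : Fin N) :
    Matrix (Fin N) (Fin (r + 1)) F :=
  Vmat α * (Gmat α β n)⁻¹

/-- For `S ⊆ [N] \ {n}` with `|S| ≤ N_r − 1 = r`, the submatrix
of `S_n` with rows in `S` and columns `2, …, N_r` has rank `|S|`. -/
theorem Smat_rows_cols_tail_rank
    {F : Type} [Field F] (N r : ℕ) (hN : 1 ≤ N)
    (α : Fin N → F) (β : Fin r → F)
    (hinj : Function.Injective (Sum.elim α β))
    (h0 : ∀ x : Fin N ⊕ Fin r, Sum.elim α β x ≠ 0)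
    (n : Fin N)
    (S : Finset (Fin N)) (hnS : n ∉ S) (hS : S.card ≤ r) :
    ((Smat α β n).submatrix
      (fun i : Fin S.card => ((S.orderIsoOfFin rfl i : S) : Fin N))
      (fun j : Fin r => j.succ)).rank = S.card := by
  classical
  set s : Fin S.card → Fin N := fun i => ((S.orderIsoOfFin rfl i : S) : Fin N) with hsdef
  have hsmem : ∀ i, s i ∈ S := fun i => (S.orderIsoOfFin rfl i).2
  have hsinj : Function.Injective s := fun a b h => by
    exact (S.orderIsoOfFin rfl).injective (Subtype.ext h)
  have hα : Function.Injective α := fun a b h => by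
    have := @hinj (Sum.inl a) (Sum.inl b) h; simpa using this
  have hβ : Function.Injective β := fun a b h => by
    have := @hinj (Sum.inr a) (Sum.inr b) h; simpa using this
  have hαβ : ∀ (a : Fin N) (b : Fin r), α a ≠ β b := by
    intro a b h
    have := @hinj (Sum.inl a) (Sum.inr b) h; simpa using this
  -- G is invertible
  have hGdet : IsUnit (Gmat α β n).det := by
    have hG : (Gmat α β n) = Matrix.vandermonde (Fin.cons (α n) β) := rfl
    rw [hG]
    refine (Matrix.det_vandermonde_ne_zero_iff.mpr ?_).isUnit
    rw [Fin.cons_injective_iff]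
    refine ⟨?_, hβ⟩
    rintro ⟨b, hb⟩
    exact hαβ n b hb.symm
  have hSG : Smat α β n * Gmat α β n = Vmat α := by
    rw [Smat]
    exact (Matrix.mul_assoc (Vmat α) (Gmat α β n)⁻¹ (Gmat α β n)).trans
      (by rw [Matrix.nonsing_inv_mul _ hGdet, Matrix.mul_one])
  -- rows are linearly independent
  have hli : LinearIndependent F (fun i : Fin S.card =>
      ((Smat α β n).submatrix (fun i : Fin S.card => s i)
        (fun j : Fin r => j.succ)) i) := by
    rw [Fintype.linearIndependent_iff]
    intro g hg i
    -- hg : ∑ i, g i • row i = 0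
    have hgk : ∀ k : Fin r, ∑ i, g i * Smat α β n (s i) k.succ = 0 := by
      intro k
      have := congrFun hg k
      simpa [Matrix.submatrix_apply, Finset.sum_apply] using this
    set d : F := ∑ i, g i * Smat α β n (s i) 0 with hd
    set node : Fin (S.card + 1) → F := Fin.cons (α n) (α ∘ s) with hnode
    set c : Fin (S.card + 1) → F := Fin.cons (-d) g with hc
    have key : ∀ j : Fin (r + 1), ∑ t, c t * node t ^ (j : ℕ) = 0 := by
      intro j
      rw [Fin.sum_univ_succ]
      have hV : ∀ i : Fin S.card, α (s i) ^ (j : ℕ)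
          = Smat α β n (s i) 0 * α n ^ (j : ℕ)
            + ∑ k : Fin r, Smat α β n (s i) k.succ * β k ^ (j : ℕ) := by
        intro i
        have := congrFun (congrFun hSG (s i)) j
        rw [Matrix.mul_apply] at this
        rw [show Vmat α (s i) j = α (s i) ^ (j : ℕ) from rfl] at this
        rw [← this, Fin.sum_univ_succ]
        simp [Gmat]
      have : ∑ t : Fin S.card, c t.succ * node t.succ ^ (j : ℕ)
          = ∑ i : Fin S.card, g i * α (s i) ^ (j : ℕ) := by
        simp [hc, hnode]
      rw [this]
      have expand : ∑ i : Fin S.card, g i * α (s i) ^ (j : ℕ)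
          = d * α n ^ (j : ℕ) := by
        calc ∑ i : Fin S.card, g i * α (s i) ^ (j : ℕ)
            = ∑ i : Fin S.card, (g i * Smat α β n (s i) 0 * α n ^ (j : ℕ)
              + ∑ k : Fin r, g i * (Smat α β n (s i) k.succ * β k ^ (j : ℕ))) := by
              refine Finset.sum_congr rfl fun i _ => ?_
              rw [hV i, mul_add, Finset.mul_sum, mul_assoc]
          _ = (∑ i, g i * Smat α β n (s i) 0) * α n ^ (j : ℕ)
              + ∑ k : Fin r, (∑ i, g i * Smat α β n (s i) k.succ) * β k ^ (j : ℕ) := by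
              rw [Finset.sum_add_distrib, Finset.sum_mul, Finset.sum_comm]
              congr 1
              refine Finset.sum_congr rfl fun k _ => ?_
              rw [Finset.sum_mul]
              refine Finset.sum_congr rfl fun i _ => ?_
              ring
          _ = d * α n ^ (j : ℕ) := by
              rw [← hd]
              have : ∀ k : Fin r, (∑ i, g i * Smat α β n (s i) k.succ) * β k ^ (j : ℕ) = 0 :=
                fun k => by rw [hgk k, zero_mul]
              rw [Finset.sum_congr rfl fun k _ => this k, Finset.sum_const_zero, add_zero]
      rw [expand]
      simp [hc, hnode]
    -- restrict to square Vandermonde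
    have hnodeinj : Function.Injective node := by
      rw [hnode, Fin.cons_injective_iff]
      constructor
      · rintro ⟨i, hi⟩
        have : α (s i) = α n := hi
        exact hnS (hα this ▸ hsmem i)
      · exact hα.comp hsinj
    set W : Matrix (Fin (S.card + 1)) (Fin (S.card + 1)) F := Matrix.vandermonde node with hW
    have hWdet : IsUnit W.det :=
      (Matrix.det_vandermonde_ne_zero_iff.mpr hnodeinj).isUnit
    have hcW : Matrix.vecMul c W = 0 := by
      funext j
      rw [Matrix.vecMul, dotProduct]
      have hj : ((Fin.castLE (by omega : S.card + 1 ≤ r + 1) j : Fin (r+1)) : ℕ) = (j : ℕ) := rfl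
      have := key (Fin.castLE (by omega) j)
      rw [hj] at this
      simpa [hW, Matrix.vandermonde] using this
    have hc0 : c = 0 := by
      have := congrArg (fun v => Matrix.vecMul v W⁻¹) hcW
      simpa [Matrix.vecMul_vecMul, Matrix.mul_nonsing_inv _ hWdet] using this
    have := congrFun hc0 i.succ
    simpa [hc] using this
  have := hli.rank_matrix
  simpa [Matrix.submatrix] using this
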